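/- arXiv:1504.02632 — 2 statements merged into one kernel-verified Lean document; each statement's English description precedes it below -/
import Mathlib

section
/- Let w_n ∈ S_n be the longest permutation (w_n(i) = n+1-i). In the twisted group algebra A(S_n), for every g ∈ S_n: (g·w_n)* · w_n* = (∏_{a<b, g⁻¹(a) < g⁻¹(b)} X_{ab}·X_{ba}) · g*, which also equals w_n* · (w_n·g)*. -/
open MvPolynomial

/-- The polynomial ring `R_n = ℂ[X_{ab} : 1 ≤ a,b ≤ n]` in `n²` commuting variables. -/
abbrev R (n : ℕ) : Type := MvPolynomial (Fin n × Fin n) ℂ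

/-- The action of `S_n` on `R_n`: `g.X_{ab} = X_{g(a) g(b)}`. -/
noncomputable def permAct {n : ℕ} (g : Equiv.Perm (Fin n)) (p : R n) : R n :=
  MvPolynomial.rename (fun ab => (g ab.1, g ab.2)) p

/-- The twisted group algebra `A(S_n) = R_n ⋊ ℂ[S_n]`, as formal `R_n`-linear
combinations of permutations. -/
abbrev A (n : ℕ) : Type := Equiv.Perm (Fin n) →₀ R n

/-- The identity element `id = 1·id` of `A(S_n)`. -/
noncomputable instance {n : ℕ} : One (A n) := ⟨Finsupp.single 1 1⟩

/-- The twisted multiplication `(p₁ g₁)·(p₂ g₂) = (p₁ · (g₁.p₂)) g₁g₂` on `A(S_n)`. -/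
noncomputable instance {n : ℕ} : Mul (A n) :=
  ⟨fun x y => x.sum fun g₁ p₁ => y.sum fun g₂ p₂ =>
    Finsupp.single (g₁ * g₂) (p₁ * permAct g₁ p₂)⟩

/-- The set of inversions `I(g) = {(a,b) : a < b, g(a) > g(b)}`. -/
def inversions {n : ℕ} (g : Equiv.Perm (Fin n)) : Finset (Fin n × Fin n) :=
  Finset.univ.filter fun ab => ab.1 < ab.2 ∧ g ab.2 < g ab.1

/-- The monomial `X_g = ∏_{(a,b) ∈ I(g⁻¹)} X_{ab}`. -/
noncomputable def Xg {n : ℕ} (g : Equiv.Perm (Fin n)) : R n :=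
  ∏ ab ∈ inversions g⁻¹, MvPolynomial.X ab

/-- The element `g* = X_g · g ∈ A(S_n)`. -/
noncomputable def gstar {n : ℕ} (g : Equiv.Perm (Fin n)) : A n :=
  Finsupp.single g (Xg g)

/-- The cycle `t_{k,j}` sending `m ↦ m+1` for `j ≤ m ≤ k-1` and `k ↦ j`,
fixing all points outside `[j,k]` (meaningful for `j ≤ k`). -/
def cyc {n : ℕ} [NeZero n] (k j : Fin n) : Equiv.Perm (Fin n) :=
  Equiv.permCongr (Equiv.addLeft j) (Fin.cycleRange (k - j))

-- AUX
lemma single_mul {n : ℕ} (g₁ g₂ : Equiv.Perm (Fin n)) (p₁ p₂ : R n) :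
    (Finsupp.single g₁ p₁ * Finsupp.single g₂ p₂ : A n)
      = Finsupp.single (g₁ * g₂) (p₁ * permAct g₁ p₂) := by
  show Finsupp.sum _ _ = _
  rw [Finsupp.sum_single_index (by simp), Finsupp.sum_single_index (by simp [permAct])]

lemma revPerm_mul_self {n : ℕ} : (Fin.revPerm * Fin.revPerm : Equiv.Perm (Fin n)) = 1 := by
  ext x; simp

lemma permAct_prod {n : ℕ} (h : Equiv.Perm (Fin n)) (s : Finset (Fin n × Fin n)) :
    permAct h (∏ ab ∈ s, (MvPolynomial.X ab : R n))
      = ∏ ab ∈ s, (MvPolynomial.X (h ab.1, h ab.2) : R n) := by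
  simp [permAct, map_prod]

variable {n : ℕ}

/-- The set S of pairs a<b with g⁻¹a < g⁻¹b. -/
noncomputable def Sset (g : Equiv.Perm (Fin n)) : Finset (Fin n × Fin n) :=
  Finset.univ.filter (fun ab : Fin n × Fin n => ab.1 < ab.2 ∧ g⁻¹ ab.1 < g⁻¹ ab.2)

lemma inv_gw (g : Equiv.Perm (Fin n)) :
    inversions (g * Fin.revPerm)⁻¹ = Sset g := by
  ext ab
  simp only [inversions, Sset, Finset.mem_filter, Finset.mem_univ, true_and,
    mul_inv_rev, Equiv.Perm.mul_apply, Fin.revPerm_symm, Equiv.Perm.inv_def,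
    Fin.revPerm_apply, Fin.rev_lt_rev]

lemma inv_w : inversions ((Fin.revPerm : Equiv.Perm (Fin n))⁻¹)
    = Finset.univ.filter (fun ab : Fin n × Fin n => ab.1 < ab.2) := by
  ext ab
  simp only [inversions, Finset.mem_filter, Finset.mem_univ, true_and,
    Equiv.Perm.inv_def, Fin.revPerm_symm, Fin.revPerm_apply, Fin.rev_lt_rev]
  tauto

lemma lemC (g : Equiv.Perm (Fin n)) :
    Xg (g * Fin.revPerm) = ∏ ab ∈ Sset g, (MvPolynomial.X ab : R n) := by
  rw [Xg, inv_gw]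

lemma lemD (g : Equiv.Perm (Fin n)) :
    Xg (Fin.revPerm : Equiv.Perm (Fin n))
      = (∏ ab ∈ Sset g, (MvPolynomial.X ab : R n)) * Xg g := by
  rw [Xg, inv_w,
    ← Finset.prod_filter_mul_prod_filter_not _ (fun ab : Fin n × Fin n => g⁻¹ ab.1 < g⁻¹ ab.2)]
  congr 1
  · congr 1
    ext ab
    simp only [Sset, Finset.mem_filter, Finset.mem_univ, true_and]
  · rw [Xg]
    congr 1
    ext ab
    simp only [inversions, Finset.mem_filter, Finset.mem_univ, true_and, not_lt]
    constructor
    · rintro ⟨h1, h2⟩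
      exact ⟨h1, lt_of_le_of_ne h2 fun he => ne_of_lt h1 (g⁻¹.injective he).symm⟩
    · rintro ⟨h1, h2⟩
      exact ⟨h1, h2.le⟩

lemma lemB (g : Equiv.Perm (Fin n)) :
    permAct Fin.revPerm (Xg (Fin.revPerm * g))
      = ∏ ab ∈ Sset g, (MvPolynomial.X ab.swap : R n) := by
  rw [Xg, permAct_prod]
  refine Finset.prod_nbij' (fun ab => (Fin.revPerm ab.2, Fin.revPerm ab.1))
    (fun cd => (Fin.revPerm cd.2, Fin.revPerm cd.1)) ?_ ?_ ?_ ?_ ?_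
  · rintro ⟨a, b⟩ hab
    simp only [inversions, Sset, Finset.mem_filter, Finset.mem_univ, true_and,
      mul_inv_rev, Equiv.Perm.mul_apply, Fin.revPerm_symm, Equiv.Perm.inv_def,
      Fin.revPerm_apply, Fin.rev_lt_rev] at hab ⊢
    exact ⟨hab.1, hab.2⟩
  · rintro ⟨c, d⟩ hcd
    simp only [inversions, Sset, Finset.mem_filter, Finset.mem_univ, true_and,
      mul_inv_rev, Equiv.Perm.mul_apply, Fin.revPerm_symm, Equiv.Perm.inv_def,
      Fin.revPerm_apply, Fin.rev_lt_rev, Fin.rev_rev] at hcd ⊢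
    exact ⟨hcd.1, hcd.2⟩
  · rintro ⟨a, b⟩ _; simp
  · rintro ⟨c, d⟩ _; simp
  · rintro ⟨a, b⟩ _; simp [Prod.swap]

lemma lemA (g : Equiv.Perm (Fin n)) :
    permAct (g * Fin.revPerm) (Xg (Fin.revPerm : Equiv.Perm (Fin n)))
      = (∏ ab ∈ Sset g, (MvPolynomial.X ab.swap : R n)) * Xg g := by
  rw [Xg, inv_w, permAct_prod]
  simp only [Equiv.Perm.mul_apply, Fin.revPerm_apply]
  rw [← Finset.prod_filter_mul_prod_filter_not _
      (fun ab : Fin n × Fin n => g (Fin.rev ab.2) < g (Fin.rev ab.1))]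
  congr 1
  · refine Finset.prod_nbij' (fun ab => (g (Fin.rev ab.2), g (Fin.rev ab.1)))
      (fun cd => (Fin.rev (g⁻¹ cd.2), Fin.rev (g⁻¹ cd.1))) ?_ ?_ ?_ ?_ ?_
    · rintro ⟨a, b⟩ hab
      simp only [Sset, Finset.mem_filter, Finset.mem_univ, true_and,
        Equiv.Perm.coe_inv, Equiv.symm_apply_apply, Fin.rev_lt_rev] at hab ⊢
      exact ⟨hab.2, hab.1⟩
    · rintro ⟨c, d⟩ hcd
      simp only [Sset, Finset.mem_filter, Finset.mem_univ, true_and,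
        Equiv.Perm.coe_inv, Equiv.apply_symm_apply, Fin.rev_rev, Fin.rev_lt_rev] at hcd ⊢
      exact ⟨hcd.2, hcd.1⟩
    · rintro ⟨a, b⟩ _; simp
    · rintro ⟨c, d⟩ _; simp
    · rintro ⟨a, b⟩ _; simp [Prod.swap]
  · rw [Xg]
    refine Finset.prod_nbij' (fun ab => (g (Fin.rev ab.1), g (Fin.rev ab.2)))
      (fun cd => (Fin.rev (g⁻¹ cd.1), Fin.rev (g⁻¹ cd.2))) ?_ ?_ ?_ ?_ ?_
    · rintro ⟨a, b⟩ hab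
      simp only [inversions, Finset.mem_filter, Finset.mem_univ, true_and, not_lt,
        Equiv.Perm.coe_inv, Equiv.symm_apply_apply, Fin.rev_lt_rev] at hab ⊢
      obtain ⟨h1, h2⟩ := hab
      refine ⟨lt_of_le_of_ne h2 fun he => ?_, h1⟩
      exact ne_of_lt h1 (Fin.rev_injective (g.injective he))
    · rintro ⟨c, d⟩ hcd
      simp only [inversions, Finset.mem_filter, Finset.mem_univ, true_and, not_lt,
        Equiv.Perm.coe_inv, Equiv.apply_symm_apply, Fin.rev_rev, Fin.rev_lt_rev] at hcd ⊢
      exact ⟨hcd.2, hcd.1.le⟩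
    · rintro ⟨a, b⟩ _; simp
    · rintro ⟨c, d⟩ _; simp
    · rintro ⟨a, b⟩ _; simp

/-- for the longest permutation `w_n` and every `g ∈ S_n`,
`(g·w_n)*·w_n* = (∏_{a<b, g⁻¹(a)<g⁻¹(b)} X_{ab}X_{ba})·g* = w_n*·(w_n·g)*`. -/
theorem longest_element_rule {n : ℕ} (g : Equiv.Perm (Fin n)) :
    gstar (g * Fin.revPerm) * gstar Fin.revPerm =
      (∏ ab ∈ Finset.univ.filter
          (fun ab : Fin n × Fin n => ab.1 < ab.2 ∧ g⁻¹ ab.1 < g⁻¹ ab.2),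
          (MvPolynomial.X ab * MvPolynomial.X ab.swap : R n)) • gstar g ∧
    gstar (g * Fin.revPerm) * gstar Fin.revPerm =
      gstar Fin.revPerm * gstar (Fin.revPerm * g) := by
  have key : gstar (g * Fin.revPerm) * gstar Fin.revPerm
      = Finsupp.single g ((∏ ab ∈ Sset g, (MvPolynomial.X ab : R n))
          * ((∏ ab ∈ Sset g, (MvPolynomial.X ab.swap : R n)) * Xg g)) := by
    rw [gstar, gstar, single_mul, lemC, lemA, mul_assoc g, revPerm_mul_self, mul_one]
  constructor
  · rw [key, gstar, Finsupp.smul_single, smul_eq_mul, ← Sset, Finset.prod_mul_distrib]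
    congr 1
    ring
  · have hg : Fin.revPerm * (Fin.revPerm * g) = g := by
      rw [← mul_assoc, revPerm_mul_self, one_mul]
    rw [key, gstar, gstar, single_mul, lemB, lemD g, hg]
    congr 1
    ring
end

section
/- In the twisted group algebra A(S_n), the element α_n* = Σ_{g∈S_n} g* factorizes as α_n* = β₁*·β₂*⋯β_n*, where β_{n-k+1}* = Σ_{k ≤ m ≤ n} t_{m,k}* for 1 ≤ k ≤ n (the factors taken in order β₁* on the left corresponding to k = n, down to β_n* on the right corresponding to k = 1). -/
open MvPolynomial

theorem Equiv.Perm.apply_inv_self {α : Type*} (f : Equiv.Perm α) (x : α) : f (f⁻¹ x) = x :=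
  Equiv.apply_symm_apply f x

theorem Equiv.Perm.inv_apply_self {α : Type*} (f : Equiv.Perm α) (x : α) : f⁻¹ (f x) = x :=
  Equiv.symm_apply_apply f x

theorem Finsupp.sum_zero {α M N : Type*} [Zero M] [AddCommMonoid N] {f : α →₀ M} :
    (f.sum fun _ _ => (0 : N)) = 0 :=
  Finset.sum_const_zero

section Aux
variable {n : ℕ} [NeZero n]

lemma cyc_val {k j : Fin n} (h : j ≤ k) (x : Fin n) :
    ((cyc k j) x).val =
      if x.val < j.val then x.val
      else if x.val < k.val then x.val + 1
      else if x.val = k.val then j.val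
      else x.val := by
  obtain ⟨m, rfl⟩ : ∃ m, n = m + 1 := ⟨n - 1, (Nat.succ_pred_eq_of_pos (NeZero.pos n)).symm⟩
  have hjk : j.val ≤ k.val := h
  have hkn : k.val < m + 1 := k.isLt
  have hxn : x.val < m + 1 := x.isLt
  have hsub : (k - j).val = k.val - j.val := Fin.sub_val_of_le h
  have hcyc : (cyc k j) x = j + (Fin.cycleRange (k - j)) (x - j) := by
    simp [cyc, Equiv.permCongr_apply, Equiv.addLeft_symm, Equiv.coe_addLeft, neg_add_eq_sub]
  rw [hcyc]
  by_cases hx : j.val ≤ x.val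
  · have hxy : (x - j).val = x.val - j.val := Fin.sub_val_of_le hx
    rcases lt_trichotomy x.val k.val with hlt | heq | hgt
    · have h1 : (x - j) < (k - j) := by
        rw [Fin.lt_def, hxy, hsub]; omega
      rw [Fin.cycleRange_of_lt h1]
      have h2 : (x - j).val + 1 < m + 1 := by omega
      have h3 : ((x - j) + 1).val = (x - j).val + 1 := Fin.val_add_one_of_lt (by
        rw [Fin.lt_def, Fin.val_last]; omega)
      rw [Fin.val_add, h3, hxy, Nat.mod_eq_of_lt (by omega)]
      simp only [if_neg (by omega : ¬ x.val < j.val), if_pos hlt]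
      omega
    · have hxk : x = k := Fin.ext heq
      subst hxk
      rw [Fin.cycleRange_self, add_zero]
      split_ifs <;> omega
    · have h1 : (k - j) < (x - j) := by
        rw [Fin.lt_def, hxy, hsub]; omega
      rw [Fin.cycleRange_of_gt h1]
      have : j + (x - j) = x := add_sub_cancel j x
      rw [this]
      simp only [if_neg (by omega : ¬ x.val < j.val), if_neg (by omega : ¬ x.val < k.val),
        if_neg (by omega : ¬ x.val = k.val)]
  · push_neg at hx
    have hxy : (x - j).val = x.val + (m + 1 - j.val) := by
      rw [Fin.sub_def]
      simp only
      rw [Nat.mod_eq_of_lt (by omega)]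
      omega
    have h1 : (k - j) < (x - j) := by
      rw [Fin.lt_def, hxy, hsub]; omega
    rw [Fin.cycleRange_of_gt h1]
    have : j + (x - j) = x := add_sub_cancel j x
    rw [this, if_pos hx]

lemma cyc_inv_val {k j : Fin n} (h : j ≤ k) (x : Fin n) :
    (((cyc k j))⁻¹ x).val =
      if x.val < j.val then x.val
      else if x.val = j.val then k.val
      else if x.val ≤ k.val then x.val - 1
      else x.val := by
  have hy : (cyc k j) ((cyc k j)⁻¹ x) = x := Equiv.Perm.apply_inv_self _ _
  have h1 : ((cyc k j) ((cyc k j)⁻¹ x)).val = x.val := by rw [hy]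
  rw [cyc_val h] at h1
  have hjk : j.val ≤ k.val := h
  have hkn : k.val < n := k.isLt
  have hxn : x.val < n := x.isLt
  have hyn : ((cyc k j)⁻¹ x).val < n := Fin.isLt _
  split_ifs at h1 ⊢ <;> omega

end Aux

section Aux2
variable {n : ℕ} [NeZero n]

lemma cyc_apply_of_lt {k j x : Fin n} (h : j ≤ k) (hx : x.val < j.val) : cyc k j x = x := by
  apply Fin.ext; rw [cyc_val h, if_pos hx]

lemma cyc_inv_apply_of_lt {k j x : Fin n} (h : j ≤ k) (hx : x.val < j.val) :
    (cyc k j)⁻¹ x = x := by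
  apply Fin.ext; rw [cyc_inv_val h, if_pos hx]

lemma cyc_inv_apply_self {k j : Fin n} (h : j ≤ k) : (cyc k j)⁻¹ j = k := by
  apply Fin.ext
  rw [cyc_inv_val h, if_neg (by omega), if_pos rfl]

omit [NeZero n] in
lemma mem_inversions {g : Equiv.Perm (Fin n)} {ab : Fin n × Fin n} :
    ab ∈ inversions g ↔ ab.1 < ab.2 ∧ g ab.2 < g ab.1 := by
  simp [inversions]

lemma cinv_lt {k m : Fin n} (hkm : k ≤ m) {x y : Fin n} (hyx : y < x) (hyk : y ≠ k) :
    (cyc m k)⁻¹ y < (cyc m k)⁻¹ x := by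
  have hyk' : y.val ≠ k.val := fun hc => hyk (Fin.ext hc)
  have hkm' : k.val ≤ m.val := hkm
  have hyx' : y.val < x.val := hyx
  have hmn : m.val < n := m.isLt
  have hxn : x.val < n := x.isLt
  rw [Fin.lt_def, cyc_inv_val hkm, cyc_inv_val hkm]
  split_ifs <;> omega

lemma inversions_cinv_fst {k m x y : Fin n} (hkm : k ≤ m)
    (hmem : (x, y) ∈ inversions (cyc m k)⁻¹) : x = k := by
  rw [mem_inversions] at hmem
  obtain ⟨hxy, hc⟩ := hmem
  by_contra hxk
  exact absurd (cinv_lt hkm hxy hxk) (not_lt.mpr hc.le)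

lemma inversions_mul {g : Equiv.Perm (Fin n)} {k m : Fin n} (hkm : k ≤ m)
    (hg : ∀ j, j ≤ k → g j = j) :
    inversions (g * cyc m k)⁻¹ =
      inversions g⁻¹ ∪ (inversions (cyc m k)⁻¹).image (fun ab => (g ab.1, g ab.2)) := by
  have hginv : ∀ j, j ≤ k → g⁻¹ j = j := fun j hj => by
    rw [Equiv.Perm.inv_eq_iff_eq, hg j hj]
  ext ⟨a, b⟩
  simp only [Finset.mem_union, Finset.mem_image, mem_inversions, mul_inv_rev,
    Equiv.Perm.mul_apply, Prod.mk.injEq, Prod.exists]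
  constructor
  · rintro ⟨hab, hinv⟩
    rcases lt_or_gt_of_ne (fun hc : g⁻¹ a = g⁻¹ b => hab.ne (g⁻¹.injective hc)) with hlt | hgt
    · exact Or.inr ⟨g⁻¹ a, g⁻¹ b, ⟨hlt, hinv⟩,
        Equiv.Perm.apply_inv_self g a, Equiv.Perm.apply_inv_self g b⟩
    · exact Or.inl ⟨hab, hgt⟩
  · rintro (⟨hab, hba⟩ | ⟨x, y, ⟨hxy, hc⟩, rfl, rfl⟩)
    · refine ⟨hab, cinv_lt hkm hba ?_⟩
      intro hbk
      have hbk2 : b = k := by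
        rw [← hg k le_rfl, ← hbk, Equiv.Perm.apply_inv_self]
      have hak : a < k := hbk2 ▸ hab
      have : g⁻¹ a = a := hginv a hak.le
      rw [this, hbk] at hba
      exact absurd hak (not_lt.mpr hba.le)
    · have hxk : x = k := inversions_cinv_fst hkm (mem_inversions.mpr ⟨hxy, hc⟩)
      subst hxk
      have hgk : g x = x := hg x le_rfl
      have hky : ¬ y ≤ x := not_le.mpr hxy
      have hgy : x < g y := by
        by_contra hle
        push_neg at hle
        have := g.injective (hg (g y) hle)
        rw [this] at hle
        exact hky hle
      refine ⟨by rw [hgk]; exact hgy, ?_⟩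
      rw [Equiv.Perm.inv_apply_self, Equiv.Perm.inv_apply_self]
      exact hc

lemma inversions_disj {g : Equiv.Perm (Fin n)} {k m : Fin n} (hkm : k ≤ m)
    (hg : ∀ j, j ≤ k → g j = j) :
    Disjoint (inversions g⁻¹)
      ((inversions (cyc m k)⁻¹).image (fun ab => (g ab.1, g ab.2))) := by
  have hginv : ∀ j, j ≤ k → g⁻¹ j = j := fun j hj => by
    rw [Equiv.Perm.inv_eq_iff_eq, hg j hj]
  rw [Finset.disjoint_left]
  rintro ⟨a, b⟩ hmem hmem2
  rw [mem_inversions] at hmem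
  obtain ⟨hab, hba⟩ := hmem
  simp only [Finset.mem_image, Prod.mk.injEq, Prod.exists] at hmem2
  obtain ⟨x, y, hxy, hxa, hyb⟩ := hmem2
  have hxk : x = k := inversions_cinv_fst hkm hxy
  have hak : a = k := by rw [← hxa, hxk, hg k le_rfl]
  have h1 : g⁻¹ a = a := hginv a (le_of_eq hak)
  rw [h1] at hba
  have hbk : g⁻¹ b < k := by rw [← hak]; exact hba
  have h2 : b = g⁻¹ b := by rw [← hg _ hbk.le, Equiv.Perm.apply_inv_self]
  rw [← h2] at hbk
  have hkb : k < b := by rw [← hak]; exact hab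
  exact absurd hkb (not_lt.mpr hbk.le)

end Aux2

section Alg
variable {n : ℕ}

@[simp] lemma permAct_zero (g : Equiv.Perm (Fin n)) : permAct g (0 : R n) = 0 := by
  simp [permAct]

@[simp] lemma permAct_one (g : Equiv.Perm (Fin n)) : permAct g (1 : R n) = 1 := by
  simp [permAct]

lemma permAct_add (g : Equiv.Perm (Fin n)) (p q : R n) :
    permAct g (p + q) = permAct g p + permAct g q := by
  simp [permAct]

lemma mul_def' (x y : A n) : x * y =
    x.sum (fun g₁ p₁ => y.sum fun g₂ p₂ =>
      Finsupp.single (g₁ * g₂) (p₁ * permAct g₁ p₂)) := rfl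

lemma one_def' : (1 : A n) = Finsupp.single 1 1 := rfl

lemma single_mul_single (g h : Equiv.Perm (Fin n)) (p q : R n) :
    (Finsupp.single g p : A n) * Finsupp.single h q
      = Finsupp.single (g * h) (p * permAct g q) := by
  rw [mul_def', Finsupp.sum_single_index (by simp [Finsupp.sum_zero]),
    Finsupp.sum_single_index (by simp)]

lemma zero_mul' (y : A n) : (0 : A n) * y = 0 := by
  rw [mul_def', Finsupp.sum_zero_index]

lemma mul_zero' (x : A n) : x * (0 : A n) = 0 := by
  rw [mul_def']
  simp [Finsupp.sum_zero_index, Finsupp.sum_zero]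

lemma add_mul' (x x' y : A n) : (x + x') * y = x * y + x' * y := by
  rw [mul_def', mul_def', mul_def']
  apply Finsupp.sum_add_index'
  · intro g; simp [Finsupp.sum_zero]
  · intro g p p'
    rw [← Finsupp.sum_add]
    apply Finsupp.sum_congr
    intro h _
    rw [add_mul, Finsupp.single_add]

lemma mul_add' (x y y' : A n) : x * (y + y') = x * y + x * y' := by
  rw [mul_def', mul_def', mul_def', ← Finsupp.sum_add]
  apply Finsupp.sum_congr
  intro g _
  apply Finsupp.sum_add_index'
  · intro h; simp
  · intro h q q'
    rw [permAct_add, mul_add, Finsupp.single_add]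

lemma mul_one' (x : A n) : x * 1 = x := by
  rw [mul_def', one_def']
  have h : ∀ g : Equiv.Perm (Fin n), ∀ p : R n,
      (Finsupp.single (1 : Equiv.Perm (Fin n)) (1 : R n)).sum
        (fun g₂ p₂ => Finsupp.single (g * g₂) (p * permAct g p₂)) = Finsupp.single g p := by
    intro g p
    rw [Finsupp.sum_single_index (by simp)]
    simp
  calc x.sum (fun g p => (Finsupp.single (1 : Equiv.Perm (Fin n)) (1 : R n)).sum
        (fun g₂ p₂ => Finsupp.single (g * g₂) (p * permAct g p₂)))
      = x.sum (fun g p => Finsupp.single g p) := by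
        apply Finsupp.sum_congr; intro g _; exact h g _
    _ = x := Finsupp.sum_single x

lemma sum_mul' {ι : Type*} (s : Finset ι) (f : ι → A n) (y : A n) :
    (∑ i ∈ s, f i) * y = ∑ i ∈ s, f i * y := by
  induction s using Finset.cons_induction with
  | empty => simp [zero_mul']
  | cons a s ha ih => rw [Finset.sum_cons, Finset.sum_cons, add_mul', ih]

lemma mul_sum' {ι : Type*} (x : A n) (s : Finset ι) (f : ι → A n) :
    x * (∑ i ∈ s, f i) = ∑ i ∈ s, x * f i := by
  induction s using Finset.cons_induction with
  | empty => simp [mul_zero']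
  | cons a s ha ih => rw [Finset.sum_cons, Finset.sum_cons, mul_add', ih]

end Alg

section Main
variable {n : ℕ} [NeZero n]

lemma permAct_prod_X (g : Equiv.Perm (Fin n)) (S : Finset (Fin n × Fin n)) :
    permAct g (∏ ab ∈ S, (MvPolynomial.X ab : R n))
      = ∏ ab ∈ S, (MvPolynomial.X (g ab.1, g ab.2) : R n) := by
  show (MvPolynomial.rename (fun ab : Fin n × Fin n => (g ab.1, g ab.2)))
      (∏ ab ∈ S, (MvPolynomial.X ab : R n)) = _
  rw [map_prod]
  exact Finset.prod_congr rfl fun ab _ => by rw [MvPolynomial.rename_X]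

lemma gstar_mul {g : Equiv.Perm (Fin n)} {k m : Fin n} (hkm : k ≤ m)
    (hg : ∀ j, j ≤ k → g j = j) :
    gstar g * gstar (cyc m k) = gstar (g * cyc m k) := by
  unfold gstar
  rw [single_mul_single]
  congr 1
  unfold Xg
  rw [inversions_mul hkm hg, Finset.prod_union (inversions_disj hkm hg)]
  congr 1
  rw [Finset.prod_image (by
    intro x _ y _ hxy
    have h1 : g x.1 = g y.1 := (Prod.mk.injEq _ _ _ _ ▸ hxy).1
    have h2 : g x.2 = g y.2 := (Prod.mk.injEq _ _ _ _ ▸ hxy).2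
    exact Prod.ext (g.injective h1) (g.injective h2))]
  exact permAct_prod_X g _

end Main

section Step
variable {n : ℕ} [NeZero n]

lemma step (κ : Fin n) :
    (∑ g ∈ Finset.univ.filter
        (fun g : Equiv.Perm (Fin n) => ∀ j : Fin n, j.val < κ.val + 1 → g j = j), gstar g) *
      (∑ m ∈ Finset.univ.filter (fun m : Fin n => κ ≤ m),
        gstar (cyc m κ)) =
    ∑ g ∈ Finset.univ.filter
        (fun g : Equiv.Perm (Fin n) => ∀ j : Fin n, j.val < κ.val → g j = j), gstar g := by
  rw [sum_mul']
  have : ∀ g ∈ Finset.univ.filter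
      (fun g : Equiv.Perm (Fin n) => ∀ j : Fin n, j.val < κ.val + 1 → g j = j),
      gstar g * (∑ m ∈ Finset.univ.filter (fun m : Fin n => κ ≤ m), gstar (cyc m κ))
        = ∑ m ∈ Finset.univ.filter (fun m : Fin n => κ ≤ m), gstar (g * cyc m κ) := by
    intro g hgmem
    rw [mul_sum']
    apply Finset.sum_congr rfl
    intro m hm
    rw [Finset.mem_filter] at hm hgmem
    exact gstar_mul hm.2 (fun j hj => hgmem.2 j (by
      have : j.val ≤ κ.val := hj
      omega))
  rw [Finset.sum_congr rfl this, ← Finset.sum_product']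
  apply Finset.sum_nbij'
    (i := fun p => p.1 * cyc p.2 κ)
    (j := fun h => (h * (cyc (h⁻¹ κ) κ)⁻¹, h⁻¹ κ))
  · rintro ⟨g, m⟩ hmem
    rw [Finset.mem_product, Finset.mem_filter, Finset.mem_filter] at hmem
    rw [Finset.mem_filter]
    refine ⟨Finset.mem_univ _, fun j hj => ?_⟩
    rw [Equiv.Perm.mul_apply, cyc_apply_of_lt hmem.2.2 hj, hmem.1.2 j (by omega)]
  · intro h hmem
    rw [Finset.mem_filter] at hmem
    have hfix : ∀ j : Fin n, j.val < κ.val → h j = j := hmem.2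
    have hκm : κ ≤ h⁻¹ κ := by
      by_contra hc
      push_neg at hc
      have h1 : (h⁻¹ κ).val < κ.val := hc
      have h2 : h (h⁻¹ κ) = h⁻¹ κ := hfix _ h1
      rw [Equiv.Perm.apply_inv_self] at h2
      rw [← h2] at h1
      omega
    rw [Finset.mem_product, Finset.mem_filter, Finset.mem_filter]
    refine ⟨⟨Finset.mem_univ _, fun j hj => ?_⟩, Finset.mem_univ _, hκm⟩
    rcases Nat.lt_or_ge j.val κ.val with hjk | hjk
    · rw [Equiv.Perm.mul_apply, cyc_inv_apply_of_lt hκm hjk, hfix j hjk]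
    · have hjκ : j = κ := Fin.ext (by omega)
      rw [hjκ, Equiv.Perm.mul_apply, cyc_inv_apply_self hκm, Equiv.Perm.apply_inv_self]
  · rintro ⟨g, m⟩ hmem
    rw [Finset.mem_product, Finset.mem_filter, Finset.mem_filter] at hmem
    have hgκ : g⁻¹ κ = κ := by
      rw [Equiv.Perm.inv_eq_iff_eq, hmem.1.2 κ (by omega)]
    have hm2 : (g * cyc m κ)⁻¹ κ = m := by
      rw [mul_inv_rev, Equiv.Perm.mul_apply, hgκ, cyc_inv_apply_self hmem.2.2]
    simp only [hm2]
    exact Prod.ext (by group) rfl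
  · intro h _
    simp only [inv_mul_cancel_right]
  · rintro ⟨g, m⟩ _
    rfl

end Step

section Final
variable {n : ℕ} [NeZero n]

lemma gstar_one : gstar (1 : Equiv.Perm (Fin n)) = 1 := by
  have h : inversions ((1 : Equiv.Perm (Fin n))⁻¹) = ∅ := by
    ext ⟨a, b⟩
    simp only [mem_inversions, Finset.notMem_empty, iff_false, not_and]
    intro hab
    simp only [inv_one, Equiv.Perm.one_apply]
    exact not_lt.mpr hab.le
  rw [gstar, Xg, h, Finset.prod_empty, one_def']

lemma permAct_mul_poly (g : Equiv.Perm (Fin n)) (p q : R n) :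
    permAct g (p * q) = permAct g p * permAct g q := by
  simp [permAct]

lemma permAct_permAct (g h : Equiv.Perm (Fin n)) (p : R n) :
    permAct g (permAct h p) = permAct (g * h) p := by
  rw [permAct, permAct, permAct, MvPolynomial.rename_rename]
  rfl

lemma permAct_one_perm (p : R n) : permAct (1 : Equiv.Perm (Fin n)) p = p := by
  have h : (fun ab : Fin n × Fin n =>
      ((1 : Equiv.Perm (Fin n)) ab.1, (1 : Equiv.Perm (Fin n)) ab.2)) = id := rfl
  rw [permAct, h, MvPolynomial.rename_id, AlgHom.id_apply]

lemma one_mul' (x : A n) : 1 * x = x := by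
  rw [one_def', mul_def', Finsupp.sum_single_index (by simp [Finsupp.sum_zero])]
  have : ∀ g : Equiv.Perm (Fin n), ∀ p : R n,
      Finsupp.single ((1 : Equiv.Perm (Fin n)) * g) ((1 : R n) * permAct 1 p)
        = Finsupp.single g p := by
    intro g p
    rw [one_mul, one_mul, permAct_one_perm]
  calc x.sum (fun g₂ p₂ => Finsupp.single ((1 : Equiv.Perm (Fin n)) * g₂)
          ((1 : R n) * permAct 1 p₂))
      = x.sum (fun g p => Finsupp.single g p) := by
        apply Finsupp.sum_congr; intro g _; exact this g _
    _ = x := Finsupp.sum_single x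

lemma mul_assoc' (x y z : A n) : x * y * z = x * (y * z) := by
  induction x using Finsupp.induction_linear with
  | zero => simp only [zero_mul', mul_zero']
  | add f g hf hg => simp only [add_mul', mul_add', hf, hg]
  | single gx p =>
    induction y using Finsupp.induction_linear with
    | zero => simp only [zero_mul', mul_zero']
    | add f g hf hg => simp only [add_mul', mul_add', hf, hg]
    | single gy q =>
      induction z using Finsupp.induction_linear with
      | zero => simp only [zero_mul', mul_zero']
      | add f g hf hg => simp only [add_mul', mul_add', hf, hg]
      | single gz r =>
        rw [single_mul_single, single_mul_single, single_mul_single, single_mul_single]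
        simp only [mul_assoc, permAct_mul_poly, permAct_permAct]

lemma prod_concat' (l : List (A n)) (x : A n) : (l ++ [x]).prod = l.prod * x := by
  induction l with
  | nil =>
    show x * 1 = 1 * x
    rw [mul_one', one_mul']
  | cons a l ihl =>
    show a * (l ++ [x]).prod = (a * l.prod) * x
    rw [ihl, ← mul_assoc']

lemma prod_drop (j : ℕ) (hj : j ≤ n) :
    ((((List.finRange n).drop (n - j)).reverse).map
        (fun k => ∑ m ∈ Finset.univ.filter (fun m : Fin n => k ≤ m),
          gstar (cyc m k))).prod =
      ∑ g ∈ Finset.univ.filter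
        (fun g : Equiv.Perm (Fin n) => ∀ x : Fin n, x.val < n - j → g x = x), gstar g := by
  induction j with
  | zero =>
    rw [Nat.sub_zero]
    have h1 : (List.finRange n).drop n = [] :=
      List.drop_eq_nil_of_le (by rw [List.length_finRange])
    rw [h1]
    have h2 : Finset.univ.filter
        (fun g : Equiv.Perm (Fin n) => ∀ x : Fin n, x.val < n → g x = x) = {1} := by
      ext g
      simp only [Finset.mem_filter, Finset.mem_univ, true_and, Finset.mem_singleton]
      constructor
      · intro hg
        ext x
        rw [hg x x.isLt]
        rfl
      · intro hg x _
        rw [hg]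
        rfl
    rw [h2, Finset.sum_singleton, gstar_one]
    rfl
  | succ j ih =>
    have hk : n - (j + 1) < n := by
      have := NeZero.pos n
      omega
    have hnj : n - j = (n - (j + 1)) + 1 := by omega
    rw [hnj] at ih
    have hlen : n - (j + 1) < (List.finRange n).length := by
      rw [List.length_finRange]; exact hk
    rw [List.drop_eq_getElem_cons hlen, List.reverse_cons, List.map_append]
    have hget : (List.finRange n)[n - (j + 1)]'hlen = (⟨n - (j + 1), hk⟩ : Fin n) := by
      simp
    rw [hget]
    rw [show (List.map (fun k => ∑ m ∈ Finset.univ.filter (fun m : Fin n => k ≤ m),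
        gstar (cyc m k)) [(⟨n - (j + 1), hk⟩ : Fin n)]) =
        [∑ m ∈ Finset.univ.filter (fun m : Fin n => (⟨n - (j + 1), hk⟩ : Fin n) ≤ m),
          gstar (cyc m ⟨n - (j + 1), hk⟩)] from rfl]
    rw [prod_concat', ih (by omega)]
    exact step (⟨n - (j + 1), hk⟩ : Fin n)

end Final


/-- factorization `α_n* = β₁*·β₂*⋯β_n*` of `α_n* = Σ_{g∈S_n} g*`,
where `β_{n-k+1}* = Σ_{k ≤ m ≤ n} t_{m,k}*` (the leftmost factor corresponding
to `k = n`, the rightmost to `k = 1`). -/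
theorem alpha_factorization {n : ℕ} [NeZero n] :
    (∑ g : Equiv.Perm (Fin n), gstar g) =
      (((List.finRange n).reverse).map
        (fun k => ∑ m ∈ Finset.univ.filter (fun m : Fin n => k ≤ m), gstar (cyc m k))).prod := by
  have h := prod_drop (n := n) n le_rfl
  rw [Nat.sub_self, List.drop_zero,
    Finset.filter_true_of_mem (fun g _ => fun x hx => absurd hx (Nat.not_lt_zero _))] at h
  exact h.symm
end
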